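/- For any 1 ≤ p < ∞, any τ > 0, any radius r > 0, any positive integer n, and any shift t ∈ ℝ^n, the number of integer points in the shifted ℓ_p ball satisfies N_p(ℤ^n, r, t) ≤ exp(τ·r^p)·Θ_p(τ; t). -/
import Mathlib


open Real BigOperators

/-- The ℓ_p "norm" (for a real exponent `p`) of a vector in `ℝ^n`:
`‖x‖_p = (∑ i, |x i|^p)^(1/p)`. -/
noncomputable def lpNorm (p : ℝ) {n : ℕ} (x : Fin n → ℝ) : ℝ :=
  (∑ i, |x i| ^ p) ^ (1 / p)

/-- `N_p(ℤ^n, r, t)`: the number of integer points `z ∈ ℤ^n` with `‖z - t‖_p ≤ r`. -/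
noncomputable def Npt (p : ℝ) (n : ℕ) (r : ℝ) (t : Fin n → ℝ) : ℕ :=
  Nat.card {z : Fin n → ℤ | lpNorm p (fun i => (z i : ℝ) - t i) ≤ r}

/-- `Θ_p(τ; s) = ∑_{z ∈ ℤ} exp(-τ |z - s|^p)`. -/
noncomputable def Theta1 (p τ s : ℝ) : ℝ :=
  ∑' z : ℤ, Real.exp (-τ * |(z : ℝ) - s| ^ p)

/-- `Θ_p(τ; t) = ∏_i Θ_p(τ; t_i)` for a vector `t ∈ ℝ^n`. -/
noncomputable def ThetaVec (p : ℝ) {n : ℕ} (τ : ℝ) (t : Fin n → ℝ) : ℝ :=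
  ∏ i, Theta1 p τ (t i)

lemma summable_aux (p τ s : ℝ) (hp : 1 ≤ p) (hτ : 0 < τ) :
    Summable (fun z : ℤ => Real.exp (-τ * |(z : ℝ) - s| ^ p)) := by
  have hnat : Summable (fun n : ℕ => Real.exp (-τ * n)) := by
    have h : ∀ n : ℕ, Real.exp (-τ * n) = (Real.exp (-τ)) ^ n := by
      intro n; rw [← Real.exp_nat_mul]; ring_nf
    simp_rw [h]
    exact summable_geometric_of_lt_one (Real.exp_pos _).le
      (by rw [Real.exp_lt_one_iff]; linarith)
  have hZ : Summable (fun z : ℤ => Real.exp (-τ * |(z : ℝ)|)) := by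
    apply Summable.of_nat_of_neg <;> simpa using hnat
  have hbase : Summable (fun z : ℤ =>
      Real.exp (τ * (|s| + 1)) * Real.exp (-τ * |(z : ℝ)|)) := hZ.mul_left _
  apply Summable.of_nonneg_of_le (fun z => (Real.exp_pos _).le) _ hbase
  intro z
  rw [← Real.exp_add]
  apply Real.exp_le_exp.mpr
  have habs := abs_sub_abs_le_abs_sub ((z : ℝ)) s
  by_cases h1 : 1 ≤ |(z : ℝ) - s|
  · have hpow : |(z : ℝ) - s| ≤ |(z : ℝ) - s| ^ p := by
      calc |(z : ℝ) - s| = |(z : ℝ) - s| ^ (1 : ℝ) := (Real.rpow_one _).symm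
        _ ≤ _ := Real.rpow_le_rpow_of_exponent_le h1 hp
    nlinarith [mul_le_mul_of_nonneg_left hpow hτ.le,
      mul_le_mul_of_nonneg_left habs hτ.le]
  · push_neg at h1
    have hnn : 0 ≤ |(z : ℝ) - s| ^ p := Real.rpow_nonneg (abs_nonneg _) p
    nlinarith [mul_nonneg hτ.le hnn, mul_le_mul_of_nonneg_left habs hτ.le,
      mul_lt_mul_of_pos_left h1 hτ]

/-- For any `1 ≤ p < ∞`, `τ > 0`, `r > 0`, positive integer `n` and shift `t ∈ ℝ^n`,
`N_p(ℤ^n, r, t) ≤ exp(τ r^p) · Θ_p(τ; t)`. -/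
theorem number_of_integer_points_le_exp_mul_theta
    (p τ r : ℝ) (hp : 1 ≤ p) (hτ : 0 < τ) (hr : 0 < r)
    (n : ℕ) (hn : 0 < n) (t : Fin n → ℝ) :
    (Npt p n r t : ℝ) ≤ Real.exp (τ * r ^ p) * ThetaVec p τ t := by
  have hp0 : (0 : ℝ) < p := lt_of_lt_of_le one_pos hp
  have hTheta_nonneg : 0 ≤ ThetaVec p τ t :=
    Finset.prod_nonneg fun i _ => tsum_nonneg fun z => (Real.exp_pos _).le
  set S := {z : Fin n → ℤ | lpNorm p (fun i => (z i : ℝ) - t i) ≤ r} with hS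
  by_cases hfin : S.Finite
  · set F := hfin.toFinset with hF
    have hcard : Npt p n r t = F.card := by
      rw [Npt, Nat.card_coe_set_eq, Set.ncard_eq_toFinset_card _ hfin]
    have hsum_le : ∀ z ∈ F, ∑ i, |(z i : ℝ) - t i| ^ p ≤ r ^ p := by
      intro z hz
      rw [hF, Set.Finite.mem_toFinset] at hz
      have hz' : (∑ i, |(z i : ℝ) - t i| ^ p) ^ (1 / p) ≤ r := hz
      have hnn : 0 ≤ ∑ i, |(z i : ℝ) - t i| ^ p :=
        Finset.sum_nonneg fun i _ => Real.rpow_nonneg (abs_nonneg _) p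
      have h2 : ((∑ i, |(z i : ℝ) - t i| ^ p) ^ (1 / p)) ^ p
          = ∑ i, |(z i : ℝ) - t i| ^ p := by
        rw [← Real.rpow_mul hnn, one_div_mul_cancel hp0.ne', Real.rpow_one]
      calc ∑ i, |(z i : ℝ) - t i| ^ p
          = ((∑ i, |(z i : ℝ) - t i| ^ p) ^ (1 / p)) ^ p := h2.symm
        _ ≤ r ^ p := Real.rpow_le_rpow (Real.rpow_nonneg hnn _) hz' hp0.le
    have hterm : ∀ z ∈ F,
        Real.exp (-(τ * r ^ p)) ≤ ∏ i, Real.exp (-τ * |(z i : ℝ) - t i| ^ p) := by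
      intro z hz
      rw [← Real.exp_sum]
      apply Real.exp_le_exp.mpr
      have h3 : ∑ i, -τ * |(z i : ℝ) - t i| ^ p
          = -τ * ∑ i, |(z i : ℝ) - t i| ^ p := by rw [Finset.mul_sum]
      rw [h3]
      nlinarith [mul_le_mul_of_nonneg_left (hsum_le z hz) hτ.le]
    set g : Fin n → ℤ → ℝ := fun i a => Real.exp (-τ * |(a : ℝ) - t i| ^ p) with hg
    set T : Fin n → Finset ℤ := fun i => F.image (fun w => w i) with hT
    have hsub : F ⊆ Fintype.piFinset T := by
      intro z hz
      rw [Fintype.mem_piFinset]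
      exact fun i => Finset.mem_image_of_mem _ hz
    have key : (F.card : ℝ) * Real.exp (-(τ * r ^ p)) ≤ ThetaVec p τ t := by
      calc (F.card : ℝ) * Real.exp (-(τ * r ^ p))
          = ∑ _z ∈ F, Real.exp (-(τ * r ^ p)) := by
            rw [Finset.sum_const, nsmul_eq_mul]
        _ ≤ ∑ z ∈ F, ∏ i, g i (z i) := Finset.sum_le_sum hterm
        _ ≤ ∑ z ∈ Fintype.piFinset T, ∏ i, g i (z i) :=
            Finset.sum_le_sum_of_subset_of_nonneg hsub
              (fun z _ _ => Finset.prod_nonneg fun i _ => (Real.exp_pos _).le)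
        _ = ∏ i, ∑ a ∈ T i, g i a := (Finset.prod_univ_sum T g).symm
        _ ≤ ∏ i, Theta1 p τ (t i) := by
            apply Finset.prod_le_prod
            · exact fun i _ => Finset.sum_nonneg fun a _ => (Real.exp_pos _).le
            · exact fun i _ => Summable.sum_le_tsum _ (fun a _ => (Real.exp_pos _).le)
                (summable_aux p τ (t i) hp hτ)
    rw [hcard]
    calc (F.card : ℝ)
        = Real.exp (τ * r ^ p) * ((F.card : ℝ) * Real.exp (-(τ * r ^ p))) := by
          rw [Real.exp_neg]
          field_simp
      _ ≤ Real.exp (τ * r ^ p) * ThetaVec p τ t :=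
          mul_le_mul_of_nonneg_left key (Real.exp_pos _).le
  · have h0 : Npt p n r t = 0 := by
      rw [Npt]
      exact @Nat.card_eq_zero_of_infinite _ (Set.infinite_coe_iff.mpr hfin)
    rw [h0]
    exact_mod_cast mul_nonneg (Real.exp_pos _).le hTheta_nonneg
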